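/- Let φ, K₀, α_∞, ν, Λ > 0 and set F := α_∞/φ, C₂ := F K₀/ν, and C₁ := 4 C₂ F K₀ / Λ². Let ξ_p, ψ, r be defined from C₁, C₂ as in the JKD setting, and let μ₀ := ∫₀^{C₁} ψ(u) du + r and μ₁ := ∫₀^{C₁} u ψ(u) du + r·ξ_p be the zeroth and first moments of the JKD representing measure dλ^D. Then μ₁/μ₀² − 1 = C₁/(2C₂) = 2K₀α_∞/(φΛ²), and hence Λ = √( 2K₀α_∞ / ( φ (μ₁/μ₀² − 1) ) ). -/

import Mathlib

/-- The pole location ξ_p of the JKD function R^D. -/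
noncomputable def xip (C₁ C₂ : ℝ) : ℝ := (C₁ + Real.sqrt (C₁ ^ 2 + 4 * C₂ ^ 2)) / 2

/-- The density ψ of the absolutely continuous part of the JKD representing measure. -/
noncomputable def psi (C₁ C₂ u : ℝ) : ℝ :=
  C₂ * Real.sqrt (u * (C₁ - u)) / (Real.pi * (C₂ ^ 2 + u * (C₁ - u)))

/-- The strength r of the Dirac mass at ξ_p. -/
noncomputable def rres (C₁ C₂ : ℝ) : ℝ :=
  2 * C₂ * Real.sqrt (xip C₁ C₂ * (xip C₁ C₂ - C₁)) / (2 * xip C₁ C₂ - C₁)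

open Real intervalIntegral MeasureTheory

noncomputable def Gfun (C₁ C₂ u : ℝ) : ℝ :=
  (C₂ / π) * Real.arcsin ((2*u - C₁)/C₁)
  - (2*C₂^2/(π * Real.sqrt (C₁^2 + 4*C₂^2))) *
      Real.arcsin (C₂*(2*u - C₁)/(C₁ * Real.sqrt (C₂^2 + u*(C₁-u))))

theorem Gfun_deriv (C₁ C₂ : ℝ) (h1 : 0 < C₁) (h2 : 0 < C₂) {u : ℝ}
    (hu : u ∈ Set.Ioo 0 C₁) : HasDerivAt (Gfun C₁ C₂) (psi C₁ C₂ u) u := by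
  obtain ⟨hu0, hu1⟩ := hu
  have hs : 0 < u * (C₁ - u) := mul_pos hu0 (by linarith)
  have hds : 0 < C₂^2 + u * (C₁ - u) := by positivity
  have hB2 : Real.sqrt (C₁^2 + 4*C₂^2) ^ 2 = C₁^2 + 4*C₂^2 := by
    rw [Real.sq_sqrt]; positivity
  have hBpos : 0 < Real.sqrt (C₁^2 + 4*C₂^2) := Real.sqrt_pos.2 (by positivity)
  set S := Real.sqrt (u * (C₁ - u)) with hS
  set Q := Real.sqrt (C₂^2 + u * (C₁ - u)) with hQ
  set B := Real.sqrt (C₁^2 + 4*C₂^2) with hBdef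
  have hSpos : 0 < S := Real.sqrt_pos.2 hs
  have hQpos : 0 < Q := Real.sqrt_pos.2 hds
  have hS2 : S^2 = u * (C₁ - u) := Real.sq_sqrt hs.le
  have hQ2 : Q^2 = C₂^2 + u * (C₁ - u) := Real.sq_sqrt hds.le
  -- term 1
  have h1inner : HasDerivAt (fun u => (2*u - C₁)/C₁) (2/C₁) u := by
    have := (((hasDerivAt_id u).const_mul 2).sub_const C₁).div_const C₁
    simpa using this
  have hw1ne : (2*u - C₁)/C₁ ≠ 1 := by
    intro h; rw [div_eq_one_iff_eq (ne_of_gt h1)] at h; linarith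
  have hw1ne' : (2*u - C₁)/C₁ ≠ -1 := by
    intro h; rw [div_eq_iff (ne_of_gt h1)] at h; nlinarith
  have h1 : HasDerivAt (fun x => Real.arcsin ((2*x - C₁)/C₁))
      (1 / Real.sqrt (1 - ((2*u - C₁)/C₁)^2) * (2/C₁)) u :=
    by have := (Real.hasDerivAt_arcsin hw1ne' hw1ne).comp u h1inner; exact this
  have hsq1 : Real.sqrt (1 - ((2*u - C₁)/C₁)^2) = 2*S/C₁ := by
    have e1 : 1 - ((2*u - C₁)/C₁)^2 = (2*S/C₁)^2 := by
      rw [div_pow, div_pow, mul_pow, hS2]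
      field_simp
      ring
    rw [e1, Real.sqrt_sq (by positivity)]
  -- term 2 inner
  have hqder : HasDerivAt (fun x => C₂^2 + x*(C₁-x)) (C₁ - 2*u) u := by
    have := ((hasDerivAt_id u).mul ((hasDerivAt_const u C₁).sub (hasDerivAt_id u))).const_add (C₂^2)
    convert this using 1
    · rfl
    · rfl
    · rfl
    · simp [id_eq]
      ring
  have hQder : HasDerivAt (fun x => Real.sqrt (C₂^2 + x*(C₁-x))) ((C₁ - 2*u)/(2*Q)) u := by
    have := (Real.hasDerivAt_sqrt (ne_of_gt hds)).comp u hqder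
    convert this using 1
    · rfl
    · rfl
    · rfl
    · rw [← hQ]; ring
  have hDder : HasDerivAt (fun x => C₁ * Real.sqrt (C₂^2 + x*(C₁-x)))
      (C₁ * ((C₁ - 2*u)/(2*Q))) u := hQder.const_mul C₁
  have hNder : HasDerivAt (fun x => C₂*(2*x - C₁)) (C₂*2) u := by
    have := ((hasDerivAt_id u).const_mul 2).sub_const C₁
    simpa using (this.const_mul C₂)
  have hDne : C₁ * Q ≠ 0 := by positivity
  have hgder : HasDerivAt (fun x => C₂*(2*x - C₁)/(C₁ * Real.sqrt (C₂^2 + x*(C₁-x))))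
      ((C₂*2 * (C₁*Q) - C₂*(2*u - C₁) * (C₁ * ((C₁ - 2*u)/(2*Q)))) / (C₁*Q)^2) u :=
    hNder.div hDder hDne
  have hg2lt : (C₂*(2*u - C₁)/(C₁*Q))^2 < 1 := by
    rw [div_pow, mul_pow, mul_pow, hQ2]
    rw [div_lt_one (by positivity)]
    nlinarith [hs, sq_nonneg (2*u - C₁)]
  have hwg : C₂*(2*u - C₁)/(C₁*Q) ≠ 1 := by
    intro h; rw [h] at hg2lt; norm_num at hg2lt
  have hwg' : C₂*(2*u - C₁)/(C₁*Q) ≠ -1 := by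
    intro h; rw [h] at hg2lt; norm_num at hg2lt
  have h2 : HasDerivAt (fun x => Real.arcsin (C₂*(2*x - C₁)/(C₁ * Real.sqrt (C₂^2 + x*(C₁-x)))))
      (1 / Real.sqrt (1 - (C₂*(2*u - C₁)/(C₁*Q))^2) *
        ((C₂*2 * (C₁*Q) - C₂*(2*u - C₁) * (C₁ * ((C₁ - 2*u)/(2*Q)))) / (C₁*Q)^2)) u :=
    by have := (Real.hasDerivAt_arcsin hwg' hwg).comp u hgder; exact this
  have hsq2 : Real.sqrt (1 - (C₂*(2*u - C₁)/(C₁*Q))^2) = B*S/(C₁*Q) := by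
    have e2 : 1 - (C₂*(2*u - C₁)/(C₁*Q))^2 = (B*S/(C₁*Q))^2 := by
      rw [div_pow, div_pow, mul_pow, mul_pow]
      field_simp
      linear_combination (C₁^2) * hQ2 - S^2 * hB2 - (C₁^2 + 4*C₂^2) * hS2
    rw [e2, Real.sqrt_sq (by positivity)]
  -- combine
  have hmain : HasDerivAt (Gfun C₁ C₂)
      ((C₂/π) * (1 / Real.sqrt (1 - ((2*u - C₁)/C₁)^2) * (2/C₁))
        - (2*C₂^2/(π*B)) * (1 / Real.sqrt (1 - (C₂*(2*u - C₁)/(C₁*Q))^2) *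
            ((C₂*2 * (C₁*Q) - C₂*(2*u - C₁) * (C₁ * ((C₁ - 2*u)/(2*Q)))) / (C₁*Q)^2))) u :=
    (h1.const_mul (C₂/π)).sub (h2.const_mul (2*C₂^2/(π*B)))
  convert hmain using 1
  rw [hsq1, hsq2]
  have hE : C₂*2 * (C₁*Q) - C₂*(2*u - C₁) * (C₁ * ((C₁ - 2*u)/(2*Q)))
      = C₂*C₁*B^2/(2*Q) := by
    rw [hB2]
    field_simp
    linear_combination 4 * hQ2
  rw [hE]
  unfold psi
  rw [← hS, show C₂^2 + u*(C₁-u) = Q^2 by rw [hQ2]]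
  have hπ : (0:ℝ) < π := Real.pi_pos
  field_simp
  linear_combination hS2 - hQ2

theorem psi_contOn (C₁ C₂ : ℝ) (h1 : 0 < C₁) (h2 : 0 < C₂) :
    ContinuousOn (psi C₁ C₂) (Set.Icc 0 C₁) := by
  unfold psi
  apply ContinuousOn.div
  · fun_prop
  · fun_prop
  · intro x hx
    have : 0 < C₂^2 + x * (C₁ - x) := by
      have h0 : 0 ≤ x * (C₁ - x) := mul_nonneg hx.1 (by linarith [hx.2])
      positivity
    positivity

theorem psi_intble (C₁ C₂ : ℝ) (h1 : 0 < C₁) (h2 : 0 < C₂) :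
    IntervalIntegrable (psi C₁ C₂) MeasureTheory.volume 0 C₁ := by
  apply ContinuousOn.intervalIntegrable
  rw [Set.uIcc_of_le h1.le]
  exact psi_contOn C₁ C₂ h1 h2

theorem Gfun_contOn (C₁ C₂ : ℝ) (h1 : 0 < C₁) (h2 : 0 < C₂) :
    ContinuousOn (Gfun C₁ C₂) (Set.Icc 0 C₁) := by
  unfold Gfun
  apply ContinuousOn.sub
  · apply Continuous.continuousOn
    exact continuous_const.mul (Real.continuous_arcsin.comp (by fun_prop))
  · apply ContinuousOn.mul continuousOn_const
    apply Real.continuous_arcsin.comp_continuousOn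
    apply ContinuousOn.div
    · fun_prop
    · fun_prop
    · intro x hx
      have h0 : 0 ≤ x * (C₁ - x) := mul_nonneg hx.1 (by linarith [hx.2])
      have : 0 < Real.sqrt (C₂^2 + x * (C₁ - x)) := Real.sqrt_pos.2 (by positivity)
      positivity

theorem Gfun_at_right (C₁ C₂ : ℝ) (h1 : 0 < C₁) (h2 : 0 < C₂) :
    Gfun C₁ C₂ C₁ = C₂/2 - C₂^2 / Real.sqrt (C₁^2 + 4*C₂^2) := by
  have hB : 0 < Real.sqrt (C₁^2 + 4*C₂^2) := Real.sqrt_pos.2 (by positivity)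
  have e1 : (2*C₁ - C₁)/C₁ = 1 := by field_simp; ring
  have e2 : C₂*(2*C₁ - C₁)/(C₁ * Real.sqrt (C₂^2 + C₁*(C₁-C₁))) = 1 := by
    simp only [sub_self, mul_zero, add_zero]
    rw [Real.sqrt_sq h2.le]
    field_simp
    ring
  unfold Gfun
  rw [e1, e2, Real.arcsin_one]
  have hπ : (0:ℝ) < π := Real.pi_pos
  field_simp

theorem Gfun_at_left (C₁ C₂ : ℝ) (h1 : 0 < C₁) (h2 : 0 < C₂) :
    Gfun C₁ C₂ 0 = -(C₂/2) + C₂^2 / Real.sqrt (C₁^2 + 4*C₂^2) := by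
  have hB : 0 < Real.sqrt (C₁^2 + 4*C₂^2) := Real.sqrt_pos.2 (by positivity)
  have e1 : (2*0 - C₁)/C₁ = -1 := by field_simp; ring
  have e2 : C₂*(2*0 - C₁)/(C₁ * Real.sqrt (C₂^2 + 0*(C₁-0))) = -1 := by
    simp only [zero_mul, add_zero, mul_zero]
    rw [Real.sqrt_sq h2.le]
    field_simp
    ring
  unfold Gfun
  rw [e1, e2, Real.arcsin_neg, Real.arcsin_one]
  have hπ : (0:ℝ) < π := Real.pi_pos
  field_simp
  ring

theorem integral_psi (C₁ C₂ : ℝ) (h1 : 0 < C₁) (h2 : 0 < C₂) :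
    ∫ u in (0:ℝ)..C₁, psi C₁ C₂ u = C₂ - 2*C₂^2 / Real.sqrt (C₁^2 + 4*C₂^2) := by
  rw [intervalIntegral.integral_eq_sub_of_hasDeriv_right_of_le h1.le
    (Gfun_contOn C₁ C₂ h1 h2)
    (fun x hx => (Gfun_deriv C₁ C₂ h1 h2 hx).hasDerivWithinAt)
    (psi_intble C₁ C₂ h1 h2)]
  rw [Gfun_at_right C₁ C₂ h1 h2, Gfun_at_left C₁ C₂ h1 h2]
  ring

theorem integral_mul_psi (C₁ C₂ : ℝ) (h1 : 0 < C₁) (h2 : 0 < C₂) :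
    ∫ u in (0:ℝ)..C₁, u * psi C₁ C₂ u
      = (C₁/2) * ∫ u in (0:ℝ)..C₁, psi C₁ C₂ u := by
  have hrefl : ∀ u, psi C₁ C₂ (C₁ - u) = psi C₁ C₂ u := by
    intro u; unfold psi; ring_nf
  have hint : IntervalIntegrable (psi C₁ C₂) MeasureTheory.volume 0 C₁ :=
    psi_intble C₁ C₂ h1 h2
  have hint2 : IntervalIntegrable (fun u => u * psi C₁ C₂ u) MeasureTheory.volume 0 C₁ := by
    apply ContinuousOn.intervalIntegrable
    rw [Set.uIcc_of_le h1.le]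
    exact continuousOn_id.mul (psi_contOn C₁ C₂ h1 h2)
  have key : ∫ x in (0:ℝ)..C₁, (C₁ - x) * psi C₁ C₂ x
      = ∫ x in (0:ℝ)..C₁, x * psi C₁ C₂ x := by
    calc ∫ x in (0:ℝ)..C₁, (C₁ - x) * psi C₁ C₂ x
        = ∫ x in (0:ℝ)..C₁, (C₁ - x) * psi C₁ C₂ (C₁ - x) := by
          apply intervalIntegral.integral_congr
          intro x _
          show (C₁ - x) * psi C₁ C₂ x = (C₁ - x) * psi C₁ C₂ (C₁ - x)
          rw [hrefl]
      _ = ∫ x in (C₁ - C₁)..(C₁ - 0), x * psi C₁ C₂ x :=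
          intervalIntegral.integral_comp_sub_left (fun x => x * psi C₁ C₂ x) C₁
      _ = ∫ x in (0:ℝ)..C₁, x * psi C₁ C₂ x := by norm_num
  have expand : ∫ x in (0:ℝ)..C₁, (C₁ - x) * psi C₁ C₂ x
      = C₁ * (∫ x in (0:ℝ)..C₁, psi C₁ C₂ x) - ∫ x in (0:ℝ)..C₁, x * psi C₁ C₂ x := by
    rw [← intervalIntegral.integral_const_mul, ← intervalIntegral.integral_sub
      (hint.const_mul C₁) hint2]
    apply intervalIntegral.integral_congr
    intro x _; ring
  rw [expand] at key
  linarith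

/-- Exact recovery of the JKD parameter Λ from the zeroth and first moments of
the representing measure of the JKD permeability. -/
theorem stmt18 (φ K₀ αinf ν Λ : ℝ)
    (hφ : 0 < φ) (hK₀ : 0 < K₀) (hα : 0 < αinf) (hν : 0 < ν) (hΛ : 0 < Λ)
    (F C₂ C₁ : ℝ)
    (hF : F = αinf / φ) (hC₂ : C₂ = F * K₀ / ν) (hC₁ : C₁ = 4 * C₂ * F * K₀ / Λ ^ 2)
    (μ₀ μ₁ : ℝ)
    (hμ₀ : μ₀ = (∫ u in (0:ℝ)..C₁, psi C₁ C₂ u) + rres C₁ C₂)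
    (hμ₁ : μ₁ = (∫ u in (0:ℝ)..C₁, u * psi C₁ C₂ u) + rres C₁ C₂ * xip C₁ C₂) :
    μ₁ / μ₀ ^ 2 - 1 = C₁ / (2 * C₂) ∧
    C₁ / (2 * C₂) = 2 * K₀ * αinf / (φ * Λ ^ 2) ∧
    Λ = Real.sqrt (2 * K₀ * αinf / (φ * (μ₁ / μ₀ ^ 2 - 1))) := by
  have hFpos : 0 < F := by rw [hF]; positivity
  have h2 : 0 < C₂ := by rw [hC₂]; positivity
  have h1 : 0 < C₁ := by rw [hC₁]; positivity
  set B := Real.sqrt (C₁^2 + 4*C₂^2) with hBdef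
  have hB2 : B ^ 2 = C₁^2 + 4*C₂^2 := Real.sq_sqrt (by positivity)
  have hBpos : 0 < B := Real.sqrt_pos.2 (by positivity)
  have hxip : xip C₁ C₂ = (C₁ + B)/2 := rfl
  have hrres : rres C₁ C₂ = 2*C₂^2/B := by
    unfold rres
    rw [hxip, show (C₁ + B)/2 * ((C₁ + B)/2 - C₁) = C₂^2 by nlinarith [hB2],
      Real.sqrt_sq h2.le, show 2*((C₁ + B)/2) - C₁ = B by ring]
    ring
  have hm0 : μ₀ = C₂ := by
    rw [hμ₀, integral_psi C₁ C₂ h1 h2, ← hBdef, hrres]; ring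
  have hm1 : μ₁ = C₂^2 + C₁*C₂/2 := by
    rw [hμ₁, integral_mul_psi C₁ C₂ h1 h2, integral_psi C₁ C₂ h1 h2, ← hBdef, hrres, hxip]
    field_simp
    ring
  have p1 : μ₁ / μ₀ ^ 2 - 1 = C₁ / (2 * C₂) := by
    rw [hm0, hm1]; field_simp; ring
  have p2 : C₁ / (2 * C₂) = 2 * K₀ * αinf / (φ * Λ ^ 2) := by
    rw [hC₁, hC₂, hF]; field_simp; ring
  refine ⟨p1, p2, ?_⟩
  rw [p1.trans p2, show 2 * K₀ * αinf / (φ * (2 * K₀ * αinf / (φ * Λ ^ 2))) = Λ ^ 2 by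
    field_simp, Real.sqrt_sq hΛ.le]
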